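/- Every graph G in which every vertex-induced subgraph has at most b times as many edges as vertices admits an orientation of its edges in which every vertex has out-degree at most 2b. -/
import Mathlib

open scoped Classical in
lemma exists_low_degree {V : Type*} [Fintype V] (G : SimpleGraph V) (b : ℕ)
    (hdens : ∀ s : Set V, (G.induce s).edgeSet.ncard ≤ b * s.ncard)
    (s : Finset V) (hs : s.Nonempty) :
    ∃ v ∈ s, (s.filter (fun u => G.Adj v u)).card ≤ 2 * b := by
  classical
  by_contra h
  push_neg at h
  set H := G.induce (↑s : Set V) with hH
  have hdegH : ∀ x : (↑s : Set V), H.degree x = (s.filter (fun u => G.Adj ↑x u)).card := by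
    intro x
    rw [SimpleGraph.degree]
    refine Finset.card_bij (fun y (_ : y ∈ H.neighborFinset x) => (y : V)) ?_ ?_ ?_
    · intro y hy
      rw [SimpleGraph.mem_neighborFinset] at hy
      simp only [Finset.mem_filter, Finset.mem_coe]
      exact ⟨y.2, by simpa [hH, SimpleGraph.comap_adj] using hy⟩
    · intro y₁ _ y₂ _ hy
      exact Subtype.ext hy
    · intro u hu
      simp only [Finset.mem_filter] at hu
      refine ⟨⟨u, hu.1⟩, ?_, rfl⟩
      rw [SimpleGraph.mem_neighborFinset]
      simpa [hH, SimpleGraph.comap_adj] using hu.2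
  have hsum : ∑ x : (↑s : Set V), H.degree x = 2 * H.edgeFinset.card :=
    SimpleGraph.sum_degrees_eq_twice_card_edges H
  have hlb : s.card * (2 * b + 1) ≤ ∑ x : (↑s : Set V), H.degree x := by
    calc s.card * (2 * b + 1) = ∑ _x : (↑s : Set V), (2 * b + 1) := by
          simp [Finset.sum_const, Finset.card_univ, mul_comm]
      _ ≤ ∑ x : (↑s : Set V), H.degree x := by
          apply Finset.sum_le_sum
          intro x _
          rw [hdegH x]
          exact Nat.succ_le_of_lt (h ↑x x.2)
  have hub : 2 * H.edgeFinset.card ≤ 2 * b * s.card := by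
    have := hdens (↑s : Set V)
    rw [Set.ncard_coe_finset, ← hH] at this
    have he : H.edgeSet.ncard = H.edgeFinset.card := by
      rw [SimpleGraph.edgeFinset, ← Set.ncard_eq_toFinset_card']
    calc 2 * H.edgeFinset.card = 2 * H.edgeSet.ncard := by rw [he]
      _ ≤ 2 * (b * s.card) := by omega
      _ = 2 * b * s.card := by ring
  have hc : 0 < s.card := Finset.card_pos.mpr hs
  have : s.card * (2 * b + 1) ≤ 2 * b * s.card := le_trans (hsum ▸ hlb) hub
  nlinarith

open scoped Classical in
lemma orient_aux {V : Type*} [Fintype V] (G : SimpleGraph V) (b : ℕ)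
    (hdens : ∀ s : Set V, (G.induce s).edgeSet.ncard ≤ b * s.ncard) :
    ∀ s : Finset V, ∃ r : V → V → Prop,
      (∀ u v, u ∈ s → v ∈ s → (G.Adj u v ↔ (r u v ∨ r v u))) ∧
      (∀ u v, r u v → ¬ r v u) ∧
      (∀ u v, r u v → u ∈ s ∧ v ∈ s) ∧
      (∀ v, {u | r v u}.ncard ≤ 2 * b) := by
  intro s
  induction s using Finset.strongInduction with
  | _ s ih =>
    rcases s.eq_empty_or_nonempty with rfl | hs
    · exact ⟨fun _ _ => False, by simp, by simp, by simp, by simp⟩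
    · obtain ⟨v, hv, hdeg⟩ := exists_low_degree G b hdens s hs
      obtain ⟨r', h1, h2, h3, h4⟩ := ih (s.erase v) (Finset.erase_ssubset hv)
      refine ⟨fun u w => r' u w ∨ (u = v ∧ w ∈ s ∧ G.Adj u w), ?_, ?_, ?_, ?_⟩
      · intro u w hu hw
        constructor
        · intro hadj
          by_cases huv : u = v
          · exact Or.inl (Or.inr ⟨huv, hw, hadj⟩)
          · by_cases hwv : w = v
            · exact Or.inr (Or.inr ⟨hwv, hu, hwv ▸ hadj.symm⟩)
            · have := (h1 u w (Finset.mem_erase.mpr ⟨huv, hu⟩)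
                (Finset.mem_erase.mpr ⟨hwv, hw⟩)).mp hadj
              tauto
        · rintro (h | h) <;> rcases h with h | ⟨_, _, h⟩
          · exact (h1 u w ((h3 u w h).1) ((h3 u w h).2)).mpr (Or.inl h)
          · exact h
          · exact (h1 u w ((h3 w u h).2) ((h3 w u h).1)).mpr (Or.inr h)
          · exact h.symm
      · rintro u w (h | ⟨rfl, _, hadj⟩) (h' | ⟨h'', _, hadj'⟩)
        · exact h2 u w h h'
        · exact (Finset.mem_erase.mp (h3 u w h).2).1 h''
        · exact (Finset.mem_erase.mp (h3 w u h').2).1 rfl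
        · exact G.irrefl (h'' ▸ hadj)
      · rintro u w (h | ⟨rfl, hw, _⟩)
        · exact ⟨Finset.mem_of_mem_erase (h3 u w h).1, Finset.mem_of_mem_erase (h3 u w h).2⟩
        · exact ⟨hv, hw⟩
      · intro w
        by_cases hwv : w = v
        · subst hwv
          have hr' : ∀ u, ¬ r' w u := fun u h =>
            (Finset.mem_erase.mp (h3 w u h).1).1 rfl
          have hset : {u | r' w u ∨ (w = w ∧ u ∈ s ∧ G.Adj w u)}
              = ↑(s.filter (fun u => G.Adj w u)) := by
            ext u
            simp only [Set.mem_setOf_eq, Finset.coe_filter, Set.mem_setOf_eq]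
            have := hr' u
            tauto
          rw [hset, Set.ncard_coe_finset]
          exact hdeg
        · have hset : {u | r' w u ∨ (w = v ∧ u ∈ s ∧ G.Adj w u)} = {u | r' w u} := by
            ext u; simp only [Set.mem_setOf_eq]; tauto
          rw [hset]; exact h4 w

theorem bounded_density_orientation {V : Type*} [Fintype V] (G : SimpleGraph V) (b : ℕ)
    (hdens : ∀ s : Set V, (G.induce s).edgeSet.ncard ≤ b * s.ncard) :
    ∃ r : V → V → Prop,
      (∀ u v, G.Adj u v ↔ (r u v ∨ r v u)) ∧
      (∀ u v, r u v → ¬ r v u) ∧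
      (∀ v, {u | r v u}.ncard ≤ 2 * b) := by
  obtain ⟨r, h1, h2, _, h4⟩ := orient_aux G b hdens Finset.univ
  exact ⟨r, fun u v => h1 u v (Finset.mem_univ u) (Finset.mem_univ v), h2, h4⟩
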